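/- Adding the tertium non datur schema to Łukasiewicz logic yields classical propositional logic: a formula α is derivable from the axiom schemata (A0)–(A4) together with all instances of the schema β ∨ ¬β (where β ∨ γ abbreviates (β→γ)→γ) via modus ponens if and only if α is a classical two-valued tautology. -/

import Mathlib

/-- Formulas of Łukasiewicz infinite-valued propositional logic:
propositional variables `var n` (with `X₁ = var 0`), falsum `⊥`, negation, implication. -/
inductive LForm : Type
  | var : ℕ → LForm
  | bot : LForm
  | neg : LForm → LForm
  | imp : LForm → LForm → LForm

namespace LForm

/-- The propositional variable X₁. -/
def X1 : LForm := var 0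

/-- Lattice disjunction: α ∨ β := (α → β) → β. -/
def or (α β : LForm) : LForm := imp (imp α β) β

/-- Lattice conjunction: α ∧ β := ¬(¬α ∨ ¬β). -/
def and (α β : LForm) : LForm := neg (or (neg α) (neg β))

/-- Biconditional: α ↔ β := (α → β) ∧ (β → α). -/
def iff (α β : LForm) : LForm := and (imp α β) (imp β α)

/-- Strong disjunction: α ⊕ β := ¬α → β. -/
def oplus (α β : LForm) : LForm := imp (neg α) β

/-- The predicate "all variables occurring in the formula are X₁". -/
def onlyX1 : LForm → Prop
  | var n => n = 0
  | bot => True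
  | neg α => onlyX1 α
  | imp α β => onlyX1 α ∧ onlyX1 β

end LForm

/-- Form₁: the set of formulas built from the single variable X₁ (and ⊥, ¬, →). -/
def Form1 : Set LForm := { α | α.onlyX1 }

/-- Provability in Łukasiewicz logic from a set `S` of assumptions: the smallest
relation containing the members of `S` and all instances of the axiom schemata
(A0)–(A4), closed under modus ponens. -/
inductive LProv (S : Set LForm) : LForm → Prop
  | hyp {α : LForm} : α ∈ S → LProv S α
  | a0 (α : LForm) : LProv S (LForm.bot.imp α)
  | a1 (α β : LForm) : LProv S (α.imp (β.imp α))
  | a2 (α β γ : LForm) : LProv S ((α.imp β).imp ((β.imp γ).imp (α.imp γ)))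
  | a3 (α β : LForm) : LProv S (((α.imp β).imp β).imp ((β.imp α).imp α))
  | a4 (α β : LForm) : LProv S ((α.neg.imp β.neg).imp (β.imp α))
  | mp {α β : LForm} : LProv S (α.imp β) → LProv S α → LProv S β

/-- A [0,1]-valued evaluation (possible world) for Łukasiewicz logic. -/
structure LEval where
  w : LForm → ℝ
  mem01 : ∀ α, w α ∈ Set.Icc (0 : ℝ) 1
  map_bot : w LForm.bot = 0
  map_neg : ∀ α, w α.neg = 1 - w α
  map_imp : ∀ α β, w (α.imp β) = min 1 (1 - (w α - w β))

/-- Semantic consequence: every evaluation making all of `S` true (value 1)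
makes `α` true. -/
def LSem (S : Set LForm) (α : LForm) : Prop :=
  ∀ v : LEval, (∀ β ∈ S, v.w β = 1) → v.w α = 1

/-- The evaluation determined compositionally by an atomic assignment `v`. -/
def evalFun (v : ℕ → ℝ) : LForm → ℝ
  | .var n => v n
  | .bot => 0
  | .neg α => 1 - evalFun v α
  | .imp α β => min 1 (1 - (evalFun v α - evalFun v β))

/-- Θ_r: the one-variable formulas true (value 1) in every possible world `w`
with `w(X₁) = r`. -/
def Theta (r : ℝ) : Set LForm :=
  { α | α ∈ Form1 ∧ ∀ v : LEval, v.w LForm.X1 = r → v.w α = 1 }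

/-- Θ_T: the one-variable formulas true (value 1) in every possible world `w`
with `w(X₁) ∈ T`. -/
def ThetaT (T : Set ℝ) : Set LForm :=
  { α | α ∈ Form1 ∧ ∀ v : LEval, v.w LForm.X1 ∈ T → v.w α = 1 }

/-- A classical two-valued evaluation: interprets ⊥, ¬, → by the classical
truth tables. -/
structure CEval where
  w : LForm → Bool
  map_bot : w LForm.bot = false
  map_neg : ∀ α, w α.neg = !(w α)
  map_imp : ∀ α β, w (α.imp β) = (!(w α) || w β)

/-- Derivability from the Łukasiewicz axiom schemata (A0)–(A4) together with all
instances of the tertium non datur schema β ∨ ¬β, via modus ponens. -/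
inductive CProv : LForm → Prop
  | a0 (α : LForm) : CProv (LForm.bot.imp α)
  | a1 (α β : LForm) : CProv (α.imp (β.imp α))
  | a2 (α β γ : LForm) : CProv ((α.imp β).imp ((β.imp γ).imp (α.imp γ)))
  | a3 (α β : LForm) : CProv (((α.imp β).imp β).imp ((β.imp α).imp α))
  | a4 (α β : LForm) : CProv ((α.neg.imp β.neg).imp (β.imp α))
  | tnd (β : LForm) : CProv (β.or β.neg)
  | mp {α β : LForm} : CProv (α.imp β) → CProv α → CProv β


namespace LukTnd

/-- Hilbert system A0–A4 + TND with a list of hypotheses. -/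
inductive HProv (Γ : List LForm) : LForm → Prop
  | hyp {α : LForm} : α ∈ Γ → HProv Γ α
  | a0 (α : LForm) : HProv Γ (LForm.bot.imp α)
  | a1 (α β : LForm) : HProv Γ (α.imp (β.imp α))
  | a2 (α β γ : LForm) : HProv Γ ((α.imp β).imp ((β.imp γ).imp (α.imp γ)))
  | a3 (α β : LForm) : HProv Γ (((α.imp β).imp β).imp ((β.imp α).imp α))
  | a4 (α β : LForm) : HProv Γ ((α.neg.imp β.neg).imp (β.imp α))
  | tnd (β : LForm) : HProv Γ ((β.imp β.neg).imp β.neg)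
  | mp {α β : LForm} : HProv Γ (α.imp β) → HProv Γ α → HProv Γ β

theorem hprov_nil_cprov {α : LForm} (h : HProv [] α) : CProv α := by
  induction h with
  | hyp h => simp at h
  | a0 α => exact CProv.a0 α
  | a1 α β => exact CProv.a1 α β
  | a2 α β γ => exact CProv.a2 α β γ
  | a3 α β => exact CProv.a3 α β
  | a4 α β => exact CProv.a4 α β
  | tnd β => exact CProv.tnd β
  | mp _ _ ih1 ih2 => exact CProv.mp ih1 ih2

variable {Γ : List LForm} {a b c : LForm}

theorem syl (h1 : HProv Γ (a.imp b)) (h2 : HProv Γ (b.imp c)) :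
    HProv Γ (a.imp c) :=
  HProv.mp (HProv.mp (HProv.a2 a b c) h1) h2

theorem clavius : HProv Γ ((a.neg.imp a).imp a) :=
  HProv.mp (HProv.a3 a a.neg) (HProv.tnd a)

theorem efq : HProv Γ (a.neg.imp (a.imp b)) :=
  syl (HProv.a1 a.neg b.neg) (HProv.a4 b a)

theorem idd : HProv Γ (a.imp a) :=
  HProv.mp (HProv.mp (HProv.a2 a (a.neg.imp a) a) (HProv.a1 a a.neg)) clavius

theorem peirce : HProv Γ (((a.imp b).imp a).imp a) :=
  syl (HProv.mp (HProv.a2 a.neg (a.imp b) a) efq) clavius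

theorem contraction : HProv Γ ((a.imp (a.imp b)).imp (a.imp b)) :=
  syl (HProv.a2 a (a.imp b) b) (peirce (a := a.imp b) (b := b))

theorem deduction (h : HProv (a :: Γ) b) : HProv Γ (a.imp b) := by
  induction h with
  | hyp h =>
    rcases List.mem_cons.mp h with h | h
    · subst h; exact idd
    · exact HProv.mp (HProv.a1 _ a) (HProv.hyp h)
  | a0 α => exact HProv.mp (HProv.a1 _ a) (HProv.a0 α)
  | a1 α β => exact HProv.mp (HProv.a1 _ a) (HProv.a1 α β)
  | a2 α β γ => exact HProv.mp (HProv.a1 _ a) (HProv.a2 α β γ)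
  | a3 α β => exact HProv.mp (HProv.a1 _ a) (HProv.a3 α β)
  | a4 α β => exact HProv.mp (HProv.a1 _ a) (HProv.a4 α β)
  | tnd β => exact HProv.mp (HProv.a1 _ a) (HProv.tnd β)
  | @mp γ δ _ _ ih1 ih2 =>
    exact HProv.mp contraction (syl ih1 (HProv.mp (HProv.a2 a γ δ) ih2))

theorem dne : HProv Γ (a.neg.neg.imp a) :=
  syl (efq (a := a.neg) (b := a)) clavius

theorem dni : HProv Γ (a.imp a.neg.neg) :=
  HProv.mp (HProv.a4 a.neg.neg a) (dne (a := a.neg))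

theorem contrapose : HProv Γ ((a.imp b).imp (b.neg.imp a.neg)) := by
  apply deduction
  apply deduction
  refine HProv.mp (HProv.tnd a) (deduction ?_)
  -- hyps: a, b.neg, a.imp b ⊢ a.neg
  have him : HProv (a :: b.neg :: (a.imp b) :: Γ) (a.imp b) := HProv.hyp (by simp)
  have hha : HProv (a :: b.neg :: (a.imp b) :: Γ) a := HProv.hyp (by simp)
  have hnb : HProv (a :: b.neg :: (a.imp b) :: Γ) b.neg := HProv.hyp (by simp)
  exact HProv.mp (HProv.mp (efq (a := b) (b := a.neg)) hnb) (HProv.mp him hha)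

theorem notimp : HProv Γ (a.imp (b.neg.imp (a.imp b).neg)) := by
  apply deduction
  apply deduction
  refine HProv.mp (HProv.tnd (a.imp b)) (deduction ?_)
  -- hyps: a.imp b, b.neg, a ⊢ (a.imp b).neg
  have him : HProv ((a.imp b) :: b.neg :: a :: Γ) (a.imp b) := HProv.hyp (by simp)
  have hha : HProv ((a.imp b) :: b.neg :: a :: Γ) a := HProv.hyp (by simp)
  have hnb : HProv ((a.imp b) :: b.neg :: a :: Γ) b.neg := HProv.hyp (by simp)
  exact HProv.mp (HProv.mp (efq (a := b) (b := (a.imp b).neg)) hnb) (HProv.mp him hha)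

theorem caseelim : HProv Γ ((b.imp a).imp ((b.neg.imp a).imp a)) := by
  apply deduction
  apply deduction
  refine HProv.mp clavius (deduction ?_)
  -- hyps: a.neg, b.neg.imp a, b.imp a ⊢ a
  have h1 : HProv (a.neg :: (b.neg.imp a) :: (b.imp a) :: Γ) (b.imp a) := HProv.hyp (by simp)
  have h2 : HProv (a.neg :: (b.neg.imp a) :: (b.imp a) :: Γ) (b.neg.imp a) := HProv.hyp (by simp)
  have h3 : HProv (a.neg :: (b.neg.imp a) :: (b.imp a) :: Γ) a.neg := HProv.hyp (by simp)
  exact HProv.mp h2 (HProv.mp (HProv.mp contrapose h1) h3)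

theorem notbot : HProv Γ LForm.bot.neg :=
  HProv.mp (HProv.tnd LForm.bot) (HProv.a0 LForm.bot.neg)

/-- Compositional two-valued evaluation from an atomic assignment. -/
def ceval (v : ℕ → Bool) : LForm → Bool
  | .var n => v n
  | .bot => false
  | .neg a => !(ceval v a)
  | .imp a b => (!(ceval v a) || ceval v b)

def sign (v : ℕ → Bool) (φ : LForm) : LForm :=
  if ceval v φ then φ else φ.neg

def litv (v : ℕ → Bool) (n : ℕ) : LForm := sign v (.var n)

def varsOf : LForm → List ℕ
  | .var n => [n]
  | .bot => []
  | .neg a => varsOf a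
  | .imp a b => varsOf a ++ varsOf b

theorem kalmar (v : ℕ → Bool) (l : List ℕ) :
    ∀ φ : LForm, (∀ n ∈ varsOf φ, n ∈ l) →
      HProv (l.map (litv v)) (sign v φ) := by
  intro φ
  induction φ with
  | var n =>
    intro hs
    exact HProv.hyp (List.mem_map_of_mem (hs n (by simp [varsOf])))
  | bot =>
    intro _
    have h : sign v LForm.bot = LForm.bot.neg := by simp [sign, ceval]
    rw [h]; exact notbot
  | neg a ih =>
    intro hs
    have iha := ih (fun n hn => hs n (by simpa [varsOf] using hn))
    cases h : ceval v a with
    | true =>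
      have hgl : sign v a.neg = a.neg.neg := by simp [sign, ceval, h]
      rw [hgl]
      rw [sign, if_pos h] at iha
      exact HProv.mp dni iha
    | false =>
      have hgl : sign v a.neg = a.neg := by simp [sign, ceval, h]
      rw [hgl]
      rwa [sign, if_neg (by simp [h])] at iha
  | imp a b iha ihb =>
    intro hs
    have ha := iha (fun n hn => hs n (by simp [varsOf, hn]))
    have hb := ihb (fun n hn => hs n (by simp [varsOf, hn]))
    cases hca : ceval v a with
    | false =>
      have hgl : sign v (a.imp b) = a.imp b := by simp [sign, ceval, hca]
      rw [hgl]
      rw [sign, if_neg (by simp [hca])] at ha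
      exact HProv.mp efq ha
    | true =>
      rw [sign, if_pos hca] at ha
      cases hcb : ceval v b with
      | true =>
        have hgl : sign v (a.imp b) = a.imp b := by simp [sign, ceval, hca, hcb]
        rw [hgl]
        rw [sign, if_pos hcb] at hb
        exact HProv.mp (HProv.a1 b a) hb
      | false =>
        have hgl : sign v (a.imp b) = (a.imp b).neg := by simp [sign, ceval, hca, hcb]
        rw [hgl]
        rw [sign, if_neg (by simp [hcb])] at hb
        exact HProv.mp (HProv.mp notimp ha) hb

theorem elimVars (α : LForm) :
    ∀ l : List ℕ, l.Nodup → (∀ v : ℕ → Bool, HProv (l.map (litv v)) α) →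
      HProv [] α := by
  intro l
  induction l with
  | nil => intro _ h; simpa using h (fun _ => true)
  | cons n l ih =>
    intro hnd h
    have hn : n ∉ l := (List.nodup_cons.mp hnd).1
    apply ih (List.nodup_cons.mp hnd).2
    intro v
    have hmap : ∀ b : Bool,
        l.map (litv (Function.update v n b)) = l.map (litv v) := by
      intro b
      apply List.map_congr_left
      intro m hm
      have hmn : m ≠ n := fun he => hn (he ▸ hm)
      simp [litv, sign, ceval, Function.update_of_ne hmn]
      exact if_congr Iff.rfl rfl rfl
    have h1 := h (Function.update v n true)
    have h2 := h (Function.update v n false)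
    rw [List.map_cons, hmap] at h1 h2
    have e1 : litv (Function.update v n true) n = LForm.var n := by
      simp [litv, sign, ceval]
    have e2 : litv (Function.update v n false) n = (LForm.var n).neg := by
      simp [litv, sign, ceval]
    rw [e1] at h1
    rw [e2] at h2
    exact HProv.mp (HProv.mp caseelim (deduction h1)) (deduction h2)

theorem sound {α : LForm} (h : CProv α) : ∀ v : CEval, v.w α = true := by
  induction h with
  | a0 α => intro v; simp [v.map_imp, v.map_bot]
  | a1 α β =>
    intro v
    simp only [v.map_imp]
    cases hα : v.w α <;> cases hβ : v.w β <;> simp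
  | a2 α β γ =>
    intro v
    simp only [v.map_imp]
    cases hα : v.w α <;> cases hβ : v.w β <;> cases hγ : v.w γ <;> simp
  | a3 α β =>
    intro v
    simp only [v.map_imp]
    cases hα : v.w α <;> cases hβ : v.w β <;> simp
  | a4 α β =>
    intro v
    simp only [v.map_imp, v.map_neg]
    cases hα : v.w α <;> cases hβ : v.w β <;> simp
  | tnd β =>
    intro v
    simp only [LForm.or, v.map_imp, v.map_neg]
    cases hβ : v.w β <;> simp
  | mp _ _ ih1 ih2 =>
    intro v
    have := ih1 v
    rw [v.map_imp, ih2 v] at this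
    simpa using this

end LukTnd

/-- Adding the tertium non datur schema to Łukasiewicz logic yields classical
propositional logic: α is derivable from (A0)–(A4) plus all instances of
β ∨ ¬β via modus ponens iff α is a classical two-valued tautology. -/
theorem lukasiewicz_plus_tnd_is_classical (α : LForm) :
    CProv α ↔ ∀ v : CEval, v.w α = true := by
  constructor
  · intro h v
    exact LukTnd.sound h v
  · intro h
    have hc : ∀ v : ℕ → Bool, LukTnd.ceval v α = true := fun v =>
      h ⟨LukTnd.ceval v, rfl, fun _ => rfl, fun _ _ => rfl⟩
    apply LukTnd.hprov_nil_cprov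
    apply LukTnd.elimVars α (LukTnd.varsOf α).dedup (List.nodup_dedup _)
    intro v
    have k := LukTnd.kalmar v (LukTnd.varsOf α).dedup α
      (fun n hn => List.mem_dedup.mpr hn)
    rwa [LukTnd.sign, if_pos (hc v)] at k
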